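/- For vectors a, b in R^m with a ≠ 0, b ≠ 0 and scalar λ ≥ 0, the point x = 0 minimizes f(x) = ||a x - b||_2 + λ·x over the set {x ∈ R : x ≥ 0} if and only if a^T b ≤ λ ||b||_2. -/

import Mathlib

noncomputable def norm2 {m : ℕ} (v : Fin m → ℝ) : ℝ := Real.sqrt (∑ k, v k ^ 2)
noncomputable def dot {m : ℕ} (u v : Fin m → ℝ) : ℝ := ∑ k, u k * v k

set_option maxHeartbeats 1000000 in
theorem univariate_nonneg_zero_opt_iff {m : ℕ} (a b : Fin m → ℝ)
    (ha : a ≠ 0) (hb : b ≠ 0) (lam : ℝ) (hlam : 0 ≤ lam) :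
    (∀ x : ℝ, 0 ≤ x → norm2 ((0 : ℝ) • a - b) + lam * (0 : ℝ)
        ≤ norm2 (x • a - b) + lam * x)
      ↔ dot a b ≤ lam * norm2 b := by
  set A : ℝ := ∑ k, a k ^ 2 with hAdef
  set B : ℝ := ∑ k, b k ^ 2 with hBdef
  set D : ℝ := dot a b with hDdef
  have hA : 0 < A := by
    obtain ⟨k, hk⟩ : ∃ k, a k ≠ 0 := by
      by_contra h; push_neg at h; exact ha (funext h)
    exact Finset.sum_pos' (fun i _ => sq_nonneg _)
      ⟨k, Finset.mem_univ k, by positivity⟩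
  have hB : 0 < B := by
    obtain ⟨k, hk⟩ : ∃ k, b k ≠ 0 := by
      by_contra h; push_neg at h; exact hb (funext h)
    exact Finset.sum_pos' (fun i _ => sq_nonneg _)
      ⟨k, Finset.mem_univ k, by positivity⟩
  have hnb : norm2 b = Real.sqrt B := rfl
  have hsB : 0 < Real.sqrt B := Real.sqrt_pos.2 hB
  have hsBsq : Real.sqrt B ^ 2 = B := Real.sq_sqrt hB.le
  have hexp : ∀ x : ℝ, (∑ k, ((x • a - b) k) ^ 2) = x ^ 2 * A - 2 * x * D + B := by
    intro x
    have : ∀ k, ((x • a - b) k) ^ 2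
        = x ^ 2 * a k ^ 2 - 2 * x * (a k * b k) + b k ^ 2 := by
      intro k; simp [Pi.smul_apply, smul_eq_mul]; ring
    simp only [this, Finset.sum_add_distrib, Finset.sum_sub_distrib,
      ← Finset.mul_sum, hDdef, dot]
    rfl
  have hN : ∀ x : ℝ, norm2 (x • a - b) = Real.sqrt (x ^ 2 * A - 2 * x * D + B) := by
    intro x; rw [norm2, hexp]
  have hzero : norm2 ((0 : ℝ) • a - b) = Real.sqrt B := by
    rw [hN]; norm_num
  constructor
  · -- optimality at 0 implies D ≤ lam * √B
    intro h
    by_contra hcon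
    push_neg at hcon
    rw [hnb] at hcon
    set s := Real.sqrt B
    have hDs : 0 < D - lam * s := by linarith
    set x : ℝ := min (s / (lam + 1)) ((D - lam * s) / (A + 1)) with hxdef
    have hx0 : 0 < x := lt_min (by positivity) (by positivity)
    have hx1 : lam * x ≤ s := by
      have h1 : x ≤ s / (lam + 1) := min_le_left _ _
      have h2 : lam * x ≤ lam * (s / (lam + 1)) :=
        mul_le_mul_of_nonneg_left h1 hlam
      have h3 : lam * (s / (lam + 1)) ≤ s := by
        rw [mul_div_assoc', div_le_iff₀ (by positivity : (0:ℝ) < lam + 1)]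
        nlinarith
      linarith
    have hx2 : x * (A + 1) ≤ D - lam * s := by
      have h1 : x ≤ (D - lam * s) / (A + 1) := min_le_right _ _
      calc x * (A + 1) ≤ ((D - lam * s) / (A + 1)) * (A + 1) :=
            mul_le_mul_of_nonneg_right h1 (by positivity)
        _ = D - lam * s := by field_simp
    have hkey := h x hx0.le
    rw [hzero, hN] at hkey
    have hQ : 0 ≤ x ^ 2 * A - 2 * x * D + B := by
      have := hexp x
      rw [← this]; positivity
    have hle : s - lam * x ≤ Real.sqrt (x ^ 2 * A - 2 * x * D + B) := by
      linarith
    have hsq : (s - lam * x) ^ 2 ≤ x ^ 2 * A - 2 * x * D + B := by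
      have := Real.sq_sqrt hQ
      nlinarith [Real.sqrt_nonneg (x ^ 2 * A - 2 * x * D + B), sub_nonneg.2 hx1]
    have hss : s ^ 2 = B := hsBsq
    nlinarith [sq_nonneg lam, hx0, mul_pos hx0 hDs]
  · -- D ≤ lam * √B implies optimality at 0
    intro hDle x hx
    rw [hzero, hN]
    set s := Real.sqrt B
    have hCS : (B - x * D) ^ 2 ≤ B * (x ^ 2 * A - 2 * x * D + B) := by
      have := Finset.sum_mul_sq_le_sq_mul_sq Finset.univ b (fun k => (x • a - b) k)
      have hbd : (∑ k, b k * (x • a - b) k) = x * D - B := by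
        have : ∀ k, b k * (x • a - b) k = x * (a k * b k) - b k ^ 2 := by
          intro k; simp [Pi.smul_apply, smul_eq_mul]; ring
        simp only [this, Finset.sum_sub_distrib, ← Finset.mul_sum, hDdef, dot]
        rfl
      rw [hbd, hexp] at this
      calc (B - x * D) ^ 2 = (x * D - B) ^ 2 := by ring
        _ ≤ _ := this
    have hQ : 0 ≤ x ^ 2 * A - 2 * x * D + B := by
      have := hexp x; rw [← this]; positivity
    have hNnn : 0 ≤ Real.sqrt (x ^ 2 * A - 2 * x * D + B) := Real.sqrt_nonneg _
    rcases le_or_gt (B - x * D) 0 with hc | hc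
    · -- then x*D ≥ B > 0, so lam*x ≥ s
      have hxD : B ≤ x * D := by linarith
      have hD0 : 0 < D := by
        rcases eq_or_lt_of_le hx with h0 | h0
        · exfalso; rw [← h0] at hxD; simp at hxD; linarith
        · nlinarith
      have hxpos : 0 < x := by nlinarith
      have : s ≤ lam * x := by
        have h1 : x * D ≤ x * (lam * s) := by
          exact mul_le_mul_of_nonneg_left (by rwa [hnb] at hDle) hxpos.le
        have h2 : B ≤ x * (lam * s) := le_trans hxD h1
        have h3 : s * s ≤ (lam * x) * s := by nlinarith [hsBsq]
        exact le_of_mul_le_mul_right (by linarith [h3]) hsB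
      linarith
    · -- B - x*D > 0
      have hle : B - x * D ≤ s * Real.sqrt (x ^ 2 * A - 2 * x * D + B) := by
        have h1 : s * Real.sqrt (x ^ 2 * A - 2 * x * D + B)
            = Real.sqrt (B * (x ^ 2 * A - 2 * x * D + B)) :=
          (Real.sqrt_mul hB.le _).symm
        rw [h1]
        exact (Real.le_sqrt hc.le (by positivity)).2 hCS
      have hxD : x * D ≤ x * (lam * s) :=
        mul_le_mul_of_nonneg_left (by rwa [hnb] at hDle) hx
      have e1 : s * s = B := by rw [← hsBsq]; ring
      have e2 : lam * x * s = x * (lam * s) := by ring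
      have h2 : s * s - lam * x * s ≤ s * Real.sqrt (x ^ 2 * A - 2 * x * D + B) := by
        linarith
      have e3 : s * (Real.sqrt (x ^ 2 * A - 2 * x * D + B) + lam * x)
          = s * Real.sqrt (x ^ 2 * A - 2 * x * D + B) + lam * x * s := by ring
      have h3 : s * s ≤ s * (Real.sqrt (x ^ 2 * A - 2 * x * D + B) + lam * x) := by
        linarith
      have h4 : s ≤ Real.sqrt (x ^ 2 * A - 2 * x * D + B) + lam * x :=
        le_of_mul_le_mul_left h3 hsB
      linarith
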